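/- The 3-dimensional hypercube graph Q_3 is 2-swappable. -/

import Mathlib

open SimpleGraph
open scoped Classical

/-- A finite simple graph `G` is 2-swappable if for every edge `e` of `G` there exist a set
`A` of edges of `G` with `e ∈ A` and `|A| ≤ 2`, and a set `B` of edges of the complement of
`G`, such that deleting the edges in `A` and adding the edges in `B` yields a graph
isomorphic to `G`. -/
def TwoSwappable {V : Type} (G : SimpleGraph V) : Prop :=
  ∀ e ∈ G.edgeSet, ∃ A B : Set (Sym2 V),
    e ∈ A ∧ A ⊆ G.edgeSet ∧ A.ncard ≤ 2 ∧ B ⊆ Gᶜ.edgeSet ∧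
    Nonempty ((G.deleteEdges A ⊔ SimpleGraph.fromEdgeSet B) ≃g G)

/-- The 3-dimensional hypercube graph: vertices are binary strings of length 3, with
edges joining strings differing in exactly one coordinate. -/
def Q3 : SimpleGraph (Fin 3 → Bool) where
  Adj x y := (Finset.univ.filter fun i => x i ≠ y i).card = 1
  symm := by
    constructor
    intro x y h
    convert h using 2
    ext i
    simp only [Finset.mem_filter]
    exact and_congr_right fun _ => ne_comm
  loopless := by
    constructor
    intro x h
    simp at h

instance : DecidableRel Q3.Adj := fun _ _ => Nat.decEq _ _

/-- full complement of a binary string -/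
def oc (v : Fin 3 → Bool) : Fin 3 → Bool := fun i => !v i

/-- the swap of `y` and `oc x` -/
def phi (x y v : Fin 3 → Bool) : Fin 3 → Bool :=
  if v = y then oc x else if v = oc x then y else v

lemma phi_invol (x y : Fin 3 → Bool) : Function.Involutive (phi x y) := by
  intro v; unfold phi; split_ifs <;> simp_all [phi]

lemma oc_adj : ∀ x y : Fin 3 → Bool, Q3.Adj x y → Q3.Adj (oc x) (oc y) := by decide

lemma oc_compl_adj : ∀ x : Fin 3 → Bool, Q3ᶜ.Adj x (oc x) := by decide

set_option synthInstance.maxSize 512 in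
set_option synthInstance.maxHeartbeats 2000000 in
set_option maxHeartbeats 4000000 in
lemma key : ∀ x y a b : Fin 3 → Bool, Q3.Adj x y →
    (((Q3.Adj a b ∧ ¬(((a = x ∧ b = y) ∨ (a = y ∧ b = x)) ∨
        ((a = oc x ∧ b = oc y) ∨ (a = oc y ∧ b = oc x)))) ∨
      ((((a = x ∧ b = oc x) ∨ (a = oc x ∧ b = x)) ∨
        ((a = y ∧ b = oc y) ∨ (a = oc y ∧ b = y))) ∧ a ≠ b))
      ↔ Q3.Adj (phi x y a) (phi x y b)) := by decide

/-- The 3-dimensional hypercube graph `Q₃` is 2-swappable. -/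
theorem stmt_11 : TwoSwappable Q3 := by
  intro e he
  induction e using Sym2.ind with
  | _ x y =>
    rw [mem_edgeSet] at he
    refine ⟨{s(x, y), s(oc x, oc y)}, {s(x, oc x), s(y, oc y)}, Set.mem_insert _ _, ?_, ?_, ?_, ?_⟩
    · rintro f (rfl | rfl)
      · exact he
      · exact oc_adj x y he
    · exact le_trans (Set.ncard_insert_le _ _) (by simp)
    · rintro f (rfl | rfl)
      · exact oc_compl_adj x
      · exact oc_compl_adj y
    · refine ⟨⟨(phi_invol x y).toPerm, ?_⟩⟩
      intro a b
      simp only [Function.Involutive.coe_toPerm, sup_adj, deleteEdges_adj, fromEdgeSet_adj,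
        Set.mem_insert_iff, Set.mem_singleton_iff, Sym2.eq_iff]
      exact (key x y a b he).symm
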